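/- The Hadamard product of two positive semi-definite real symmetric matrices is positive semi-definite (Schur product theorem). -/

import Mathlib

open Matrix

theorem stmt_4 (n : ℕ) (M N : Matrix (Fin n) (Fin n) ℝ)
    (hM : M.PosSemidef) (hN : N.PosSemidef) :
    (M.hadamard N).PosSemidef := by
  obtain ⟨A, hAherm, hAA⟩ : ∃ A : Matrix (Fin n) (Fin n) ℝ, A.IsHermitian ∧ A * A = M := by
    open MatrixOrder in
    exact ⟨CFC.sqrt M, (CFC.sqrt_nonneg M).posSemidef.1, CFC.sqrt_mul_sqrt_self M hM.nonneg⟩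
  have hMA : ∀ i j, M i j = ∑ k, A k i * A k j := by
    intro i j
    rw [← hAA]
    simp only [Matrix.mul_apply]
    refine Finset.sum_congr rfl fun k _ => ?_
    rw [show A i k = A k i from congrFun (congrFun hAherm.symm i) k]
  have hMsymm : ∀ i j, M j i = M i j := fun i j => by
    simpa using (congrFun (congrFun hM.1 i) j)
  have hNsymm : ∀ i j, N j i = N i j := fun i j => by
    simpa using (congrFun (congrFun hN.1 i) j)
  refine posSemidef_iff_dotProduct_mulVec.mpr ⟨?_, ?_⟩
  · exact IsHermitian.ext fun i j => by
      simp [Matrix.hadamard_apply, hMsymm i j, hNsymm i j]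
  · intro x
    have key : (star x ⬝ᵥ (M.hadamard N) *ᵥ x) =
        ∑ k, (star (fun j => A k j * x j) ⬝ᵥ N *ᵥ (fun j => A k j * x j)) := by
      calc star x ⬝ᵥ (M.hadamard N) *ᵥ x
          = ∑ i, ∑ j, ∑ k, (A k i * x i) * N i j * (A k j * x j) := by
            simp only [dotProduct, mulVec, Matrix.hadamard_apply, Pi.star_apply,
              star_trivial, Finset.mul_sum]
            refine Finset.sum_congr rfl fun i _ => Finset.sum_congr rfl fun j _ => ?_
            rw [hMA i j, Finset.sum_mul, Finset.sum_mul, Finset.mul_sum]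
            exact Finset.sum_congr rfl fun k _ => by ring
        _ = ∑ k, ∑ i, ∑ j, (A k i * x i) * N i j * (A k j * x j) := by
            rw [Finset.sum_congr rfl fun i _ => Finset.sum_comm]
            rw [Finset.sum_comm]
        _ = ∑ k, (star (fun j => A k j * x j) ⬝ᵥ N *ᵥ (fun j => A k j * x j)) := by
            refine Finset.sum_congr rfl fun k _ => ?_
            simp only [dotProduct, mulVec, Pi.star_apply, star_trivial, Finset.mul_sum]
            exact Finset.sum_congr rfl fun i _ => Finset.sum_congr rfl fun j _ => by ring
    rw [key]
    exact Finset.sum_nonneg fun k _ => hN.dotProduct_mulVec_nonneg _
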